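/- Let q : ℝⁿ → ℝ ∪ {∞} be proper lsc and continuous relative to its domain, c continuously differentiable. Suppose x⋆ is feasible (x⋆ ∈ dom q, c(x⋆) ≤ 0) and there exist a feasible sequence x^k → x⋆ and y^k ∈ ℝ₊ᵐ with dist(-∇c(x^k)ᵀ y^k, ∂q(x^k)) → 0 and y_i^k c_i(x⋆) = 0 for all i, k (i.e. x⋆ is A-KKT optimal). If (y^k) is bounded, then x⋆ is KKT optimal: there exists y⋆ ∈ ℝ₊ᵐ with -∇c(x⋆)ᵀ y⋆ ∈ ∂q(x⋆) and y⋆_i c_i(x⋆) = 0 for all i. -/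

import Mathlib

open Filter Topology

/-- The regular (Fréchet) subdifferential of `h` at `xb`. -/
noncomputable def FSubdiff {n : ℕ} (h : EuclideanSpace ℝ (Fin n) → EReal)
    (xb : EuclideanSpace ℝ (Fin n)) : Set (EuclideanSpace ℝ (Fin n)) :=
  {v | 0 ≤ Filter.liminf
    (fun x => (h x - h xb - ((inner ℝ v (x - xb) : ℝ) : EReal)) / ((‖x - xb‖ : ℝ) : EReal))
    (𝓝[≠] xb)}

/-- The limiting subdifferential of `h` at `xb`. -/
noncomputable def LimSubdiff {n : ℕ} (h : EuclideanSpace ℝ (Fin n) → EReal)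
    (xb : EuclideanSpace ℝ (Fin n)) : Set (EuclideanSpace ℝ (Fin n)) :=
  {v | h xb ≠ ⊤ ∧ ∃ (x : ℕ → EuclideanSpace ℝ (Fin n)) (w : ℕ → EuclideanSpace ℝ (Fin n)),
    Tendsto x atTop (𝓝 xb) ∧ Tendsto w atTop (𝓝 v) ∧
    Tendsto (fun k => h (x k)) atTop (𝓝 (h xb)) ∧ ∀ k, w k ∈ FSubdiff h (x k)}

lemma continuous_gradient_of_contDiff {n : ℕ} {f : EuclideanSpace ℝ (Fin n) → ℝ}
    (hf : ContDiff ℝ 1 f) : Continuous (gradient f) := by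
  have h : Continuous (fderiv ℝ f) := hf.continuous_fderiv one_ne_zero
  have he : gradient f
      = fun x => (InnerProductSpace.toDual ℝ (EuclideanSpace ℝ (Fin n))).symm (fderiv ℝ f x) :=
    rfl
  rw [he]
  exact (InnerProductSpace.toDual ℝ (EuclideanSpace ℝ (Fin n))).symm.continuous.comp h

/-- an A-KKT optimal point with bounded multiplier sequence is KKT optimal:
there is `y⋆ ≥ 0` with `-∇c(x⋆)ᵀ y⋆ ∈ ∂q(x⋆)` and `y⋆_i c_i(x⋆) = 0` for all `i`. -/
theorem AKKT_with_bounded_multipliers_is_KKT {n m : ℕ}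
    (q : EuclideanSpace ℝ (Fin n) → EReal)
    (hproper : (∀ x, q x ≠ ⊥) ∧ ∃ x, q x ≠ ⊤)
    (hlsc : LowerSemicontinuous q)
    (hqcont : ∀ (x : ℕ → EuclideanSpace ℝ (Fin n)) (xb : EuclideanSpace ℝ (Fin n)),
      (∀ k, q (x k) ≠ ⊤) → Tendsto x atTop (𝓝 xb) →
      Tendsto (fun k => q (x k)) atTop (𝓝 (q xb)))
    (c : Fin m → EuclideanSpace ℝ (Fin n) → ℝ) (hc : ∀ i, ContDiff ℝ 1 (c i))
    (xs : EuclideanSpace ℝ (Fin n))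
    (hxsdom : q xs ≠ ⊤) (hxsfeas : ∀ i, c i xs ≤ 0)
    (x : ℕ → EuclideanSpace ℝ (Fin n))
    (hxdom : ∀ k, q (x k) ≠ ⊤) (hxfeas : ∀ k i, c i (x k) ≤ 0)
    (hx : Tendsto x atTop (𝓝 xs))
    (y : ℕ → Fin m → ℝ) (hynn : ∀ k i, 0 ≤ y k i)
    (hdist : Tendsto
      (fun k => Metric.infEDist (-(∑ i, y k i • gradient (c i) (x k))) (LimSubdiff q (x k)))
      atTop (𝓝 0))
    (hcompl : ∀ k i, y k i * c i xs = 0)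
    (hbdd : ∃ R : ℝ, ∀ k i, |y k i| ≤ R) :
    ∃ ys : Fin m → ℝ, (∀ i, 0 ≤ ys i) ∧
      -(∑ i, ys i • gradient (c i) xs) ∈ LimSubdiff q xs ∧
      ∀ i, ys i * c i xs = 0 := by
  classical
  obtain ⟨R, hR⟩ := hbdd
  -- extract a convergent subsequence of the multipliers
  have hmem : ∀ k, y k ∈ Metric.closedBall (0 : Fin m → ℝ) (max R 0) := by
    intro k
    rw [Metric.mem_closedBall, dist_zero_right]
    refine (pi_norm_le_iff_of_nonneg (le_max_right R 0)).2 fun i => ?_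
    exact le_trans (by simpa using hR k i) (le_max_left R 0)
  obtain ⟨ys, -, φ, hφ, hyconv⟩ :=
    (isCompact_closedBall (0 : Fin m → ℝ) (max R 0)).tendsto_subseq hmem
  have hyi : ∀ i, Tendsto (fun k => y (φ k) i) atTop (𝓝 (ys i)) := fun i =>
    ((continuous_apply i).tendsto ys).comp hyconv
  have hysnn : ∀ i, 0 ≤ ys i := fun i =>
    le_of_tendsto_of_tendsto' tendsto_const_nhds (hyi i) (fun k => hynn (φ k) i)
  have hyscompl : ∀ i, ys i * c i xs = 0 := by
    intro i
    have h1 : Tendsto (fun k => y (φ k) i * c i xs) atTop (𝓝 (ys i * c i xs)) :=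
      (hyi i).mul_const _
    have h2 : Tendsto (fun k => y (φ k) i * c i xs) atTop (𝓝 0) := by
      have he : (fun k => y (φ k) i * c i xs) = fun _ => (0:ℝ) :=
        funext fun k => hcompl (φ k) i
      rw [he]; exact tendsto_const_nhds
    exact tendsto_nhds_unique h1 h2
  set vs := -(∑ i, ys i • gradient (c i) xs) with hvs
  set vseq : ℕ → EuclideanSpace ℝ (Fin n) :=
    fun k => -(∑ i, y k i • gradient (c i) (x k)) with hvseq
  have hgrad : ∀ i, Continuous (gradient (c i)) :=
    fun i => continuous_gradient_of_contDiff (hc i)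
  have hφtop : Tendsto φ atTop atTop := hφ.tendsto_atTop
  -- eventual finiteness of the distance ⇒ choose a tail
  have hdφ : Tendsto (fun k => EMetric.infEdist (vseq (φ k)) (LimSubdiff q (x (φ k))))
      atTop (𝓝 0) := hdist.comp hφtop
  have hev : ∀ᶠ k in atTop,
      EMetric.infEdist (vseq (φ k)) (LimSubdiff q (x (φ k))) < 1 :=
    hdφ.eventually (gt_mem_nhds (by norm_num : (0:ENNReal) < 1))
  obtain ⟨N, hN⟩ := eventually_atTop.1 hev
  set ψ : ℕ → ℕ := fun k => φ (k + N) with hψ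
  have hψtop : Tendsto ψ atTop atTop := hφtop.comp (tendsto_add_atTop_nat N)
  have hxψ : Tendsto (fun k => x (ψ k)) atTop (𝓝 xs) := hx.comp hψtop
  have hyψ : ∀ i, Tendsto (fun k => y (ψ k) i) atTop (𝓝 (ys i)) :=
    fun i => (hyi i).comp (tendsto_add_atTop_nat N)
  have hvψ : Tendsto (fun k => vseq (ψ k)) atTop (𝓝 vs) := by
    refine Tendsto.neg (tendsto_finset_sum _ fun i _ => ?_)
    exact (hyψ i).smul (((hgrad i).tendsto xs).comp hxψ)
  have hdψ : Tendsto (fun k => EMetric.infEdist (vseq (ψ k)) (LimSubdiff q (x (ψ k))))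
      atTop (𝓝 0) := hdφ.comp (tendsto_add_atTop_nat N)
  have hfin : ∀ k, EMetric.infEdist (vseq (ψ k)) (LimSubdiff q (x (ψ k))) ≠ ⊤ :=
    fun k => (lt_of_lt_of_le (hN (k + N) (Nat.le_add_left N k)) le_top).ne
  -- choose nearby limiting subgradients
  have hw : ∀ k, ∃ w ∈ LimSubdiff q (x (ψ k)),
      edist (vseq (ψ k)) w
        < EMetric.infEdist (vseq (ψ k)) (LimSubdiff q (x (ψ k))) + ((k : ENNReal))⁻¹ := by
    intro k
    refine EMetric.infEdist_lt_iff.1 ?_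
    exact ENNReal.lt_add_right (hfin k) (ENNReal.inv_ne_zero.2 (ENNReal.natCast_ne_top k))
  choose w hwmem hwlt using hw
  have hedist : Tendsto (fun k => edist (vseq (ψ k)) (w k)) atTop (𝓝 0) := by
    have hsum : Tendsto
        (fun k => EMetric.infEdist (vseq (ψ k)) (LimSubdiff q (x (ψ k))) + ((k : ENNReal))⁻¹)
        atTop (𝓝 0) := by
      simpa using hdψ.add ENNReal.tendsto_inv_nat_nhds_zero
    exact tendsto_of_tendsto_of_tendsto_of_le_of_le tendsto_const_nhds hsum
      (fun k => zero_le) (fun k => (hwlt k).le)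
  have hdistw : Tendsto (fun k => dist (vseq (ψ k)) (w k)) atTop (𝓝 0) := by
    have := (ENNReal.tendsto_toReal (by norm_num : (0:ENNReal) ≠ ⊤)).comp hedist
    simpa [Function.comp_def, dist_edist] using this
  have hwconv : Tendsto w atTop (𝓝 vs) := hvψ.congr_dist hdistw
  -- diagonalize: each w k is a limit of Fréchet subgradients near x (ψ k)
  have key : ∀ k, ∃ X W : EuclideanSpace ℝ (Fin n),
      dist X (x (ψ k)) < 1 / (k + 1) ∧ dist W (w k) < 1 / (k + 1) ∧
      q X ≠ ⊤ ∧ W ∈ FSubdiff q X := by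
    intro k
    obtain ⟨hne, a, b, ha, hb, hq, hfs⟩ := hwmem k
    have hpos : (0:ℝ) < 1 / (k + 1) := by positivity
    have E1 : ∀ᶠ j in atTop, dist (a j) (x (ψ k)) < 1 / (k + 1) := by
      have := ha.eventually (Metric.ball_mem_nhds (x (ψ k)) hpos)
      simpa [Metric.mem_ball] using this
    have E2 : ∀ᶠ j in atTop, dist (b j) (w k) < 1 / (k + 1) := by
      have := hb.eventually (Metric.ball_mem_nhds (w k) hpos)
      simpa [Metric.mem_ball] using this
    have E3 : ∀ᶠ j in atTop, q (a j) ≠ ⊤ := by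
      have := hq.eventually (isOpen_Iio.mem_nhds (lt_top_iff_ne_top.2 hne))
      exact this.mono fun j hj => hj.ne
    obtain ⟨j, h1, h2, h3⟩ := (E1.and (E2.and E3)).exists
    exact ⟨a j, b j, h1, h2, h3, hfs j⟩
  choose X W h1 h2 h3 h4 using key
  have hone : Tendsto (fun k : ℕ => 1 / ((k : ℝ) + 1)) atTop (𝓝 0) :=
    tendsto_one_div_add_atTop_nhds_zero_nat
  have hXconv : Tendsto X atTop (𝓝 xs) := by
    refine hxψ.congr_dist ?_
    refine squeeze_zero (fun k => dist_nonneg) (fun k => ?_) hone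
    rw [dist_comm]; exact (h1 k).le
  have hWconv : Tendsto W atTop (𝓝 vs) := by
    refine hwconv.congr_dist ?_
    refine squeeze_zero (fun k => dist_nonneg) (fun k => ?_) hone
    rw [dist_comm]; exact (h2 k).le
  have hqX : Tendsto (fun k => q (X k)) atTop (𝓝 (q xs)) := hqcont X xs h3 hXconv
  exact ⟨ys, hysnn, ⟨hxsdom, X, W, hXconv, hWconv, hqX, h4⟩, hyscompl⟩
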